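/- Let A be a bounded normal operator on a complex Hilbert space H (i.e., A*A = AA*), let x ∈ H, and let C > 0. Then the sequence (A^k x)_{k∈ℕ} is a Bessel sequence in H with bound C if and only if the sequence ((A*)^k x)_{k∈ℕ} is a Bessel sequence in H with bound C, where A* denotes the adjoint of A. -/

import Mathlib

open MeasureTheory ContinuousLinearMap

/-- `y` is a Bessel sequence with Bessel bound `C`:
`∑_j |⟨v, y_j⟩|² ≤ C‖v‖²` for all `v` (stated via finite partial sums). -/
def IsBesselSequenceWith {H : Type*} [NormedAddCommGroup H] [InnerProductSpace ℂ H]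
    {ι : Type*} (y : ι → H) (C : ℝ) : Prop :=
  ∀ v : H, ∀ F : Finset ι, ∑ j ∈ F, ‖(inner ℂ v (y j) : ℂ)‖ ^ 2 ≤ C * ‖v‖ ^ 2

section Aux

variable {H : Type*} [NormedAddCommGroup H] [InnerProductSpace ℂ H] [CompleteSpace H]

local notation "⟪" x ", " y "⟫" => @inner ℂ _ _ x y

lemma norm_apply_eq_of_normal (T : H →L[ℂ] H) (hT : T * star T = star T * T) (v : H) :
    ‖T v‖ = ‖(star T) v‖ := by
  have happ : T ((star T) v) = (star T) (T v) := by
    have := congrArg (fun S : H →L[ℂ] H => S v) hT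
    simpa using this
  have h : (⟪T v, T v⟫ : ℂ) = ⟪(star T) v, (star T) v⟫ := by
    rw [star_eq_adjoint] at happ ⊢
    calc (⟪T v, T v⟫ : ℂ) = ⟪v, (adjoint T) (T v)⟫ := (adjoint_inner_right T v (T v)).symm
      _ = ⟪v, T ((adjoint T) v)⟫ := by rw [← happ]
      _ = ⟪(adjoint T) v, (adjoint T) v⟫ := (adjoint_inner_left T ((adjoint T) v) v).symm
  have h2 : ‖T v‖ ^ 2 = ‖(star T) v‖ ^ 2 := by
    rw [← inner_self_eq_norm_sq (𝕜 := ℂ), ← inner_self_eq_norm_sq (𝕜 := ℂ), h]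
  calc ‖T v‖ = Real.sqrt (‖T v‖ ^ 2) := by rw [Real.sqrt_sq (norm_nonneg _)]
    _ = Real.sqrt (‖(star T) v‖ ^ 2) := by rw [h2]
    _ = ‖(star T) v‖ := Real.sqrt_sq (norm_nonneg _)

lemma bessel_iff_synthesis {ι : Type*} (y : ι → H) (C : ℝ) (hC : 0 < C) :
    IsBesselSequenceWith y C ↔
      ∀ (F : Finset ι) (c : ι → ℂ),
        ‖∑ j ∈ F, c j • y j‖ ^ 2 ≤ C * ∑ j ∈ F, ‖c j‖ ^ 2 := by
  constructor
  · intro hB F c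
    set u : H := ∑ j ∈ F, c j • y j with hu
    have hb : ∑ j ∈ F, ‖(⟪u, y j⟫ : ℂ)‖ ^ 2 ≤ C * ‖u‖ ^ 2 := hB u F
    have hkey : ‖u‖ ^ 2 ≤ ∑ j ∈ F, ‖c j‖ * ‖(⟪u, y j⟫ : ℂ)‖ := by
      have h1 : (⟪u, u⟫ : ℂ) = ∑ j ∈ F, c j * ⟪u, y j⟫ := by
        rw [hu, inner_sum]
        exact Finset.sum_congr rfl fun j _ => inner_smul_right _ _ _
      have h2 : ‖u‖ ^ 2 = Complex.re (⟪u, u⟫ : ℂ) := by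
        rw [← inner_self_eq_norm_sq (𝕜 := ℂ), RCLike.re_to_complex]
      rw [h2, h1]
      calc Complex.re (∑ j ∈ F, c j * ⟪u, y j⟫) ≤ ‖∑ j ∈ F, c j * (⟪u, y j⟫ : ℂ)‖ :=
            Complex.re_le_norm _
        _ ≤ ∑ j ∈ F, ‖c j * (⟪u, y j⟫ : ℂ)‖ := norm_sum_le _ _
        _ = ∑ j ∈ F, ‖c j‖ * ‖(⟪u, y j⟫ : ℂ)‖ := by simp [norm_mul]
    have hcs : (∑ j ∈ F, ‖c j‖ * ‖(⟪u, y j⟫ : ℂ)‖) ^ 2 ≤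
        (∑ j ∈ F, ‖c j‖ ^ 2) * (∑ j ∈ F, ‖(⟪u, y j⟫ : ℂ)‖ ^ 2) :=
      Finset.sum_mul_sq_le_sq_mul_sq F _ _
    have ha : (0:ℝ) ≤ ∑ j ∈ F, ‖c j‖ ^ 2 :=
      Finset.sum_nonneg fun j _ => sq_nonneg _
    have hu2 : (0:ℝ) ≤ ‖u‖ ^ 2 := sq_nonneg _
    rcases eq_or_lt_of_le hu2 with h0 | h0
    · rw [← h0]; positivity
    · have h4 : (‖u‖ ^ 2) ^ 2 ≤ (∑ j ∈ F, ‖c j‖ ^ 2) * (C * ‖u‖ ^ 2) := by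
        calc (‖u‖ ^ 2) ^ 2 ≤ (∑ j ∈ F, ‖c j‖ * ‖(⟪u, y j⟫ : ℂ)‖) ^ 2 := by
              apply pow_le_pow_left₀ hu2 hkey
          _ ≤ (∑ j ∈ F, ‖c j‖ ^ 2) * (∑ j ∈ F, ‖(⟪u, y j⟫ : ℂ)‖ ^ 2) := hcs
          _ ≤ (∑ j ∈ F, ‖c j‖ ^ 2) * (C * ‖u‖ ^ 2) := by
              apply mul_le_mul_of_nonneg_left hb ha
      nlinarith
  · intro hS v F
    set c : ι → ℂ := fun j => ⟪y j, v⟫ with hc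
    set u : H := ∑ j ∈ F, c j • y j with hu
    set S : ℝ := ∑ j ∈ F, ‖(⟪v, y j⟫ : ℂ)‖ ^ 2 with hSdef
    have hS0 : 0 ≤ S := Finset.sum_nonneg fun j _ => sq_nonneg _
    have h1 : (⟪v, u⟫ : ℂ) = (S : ℂ) := by
      rw [hu, inner_sum, hSdef]
      push_cast
      refine Finset.sum_congr rfl fun j _ => ?_
      rw [inner_smul_right]
      show (⟪y j, v⟫ : ℂ) * ⟪v, y j⟫ = (‖(⟪v, y j⟫ : ℂ)‖ : ℂ) ^ 2
      rw [norm_inner_symm v (y j), ← inner_conj_symm (y j) v, mul_comm, Complex.mul_conj,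
        Complex.normSq_eq_norm_sq, RCLike.norm_conj]
      push_cast
      ring
    have h2 : S ≤ ‖v‖ * ‖u‖ := by
      calc S = ‖(S : ℂ)‖ := by
            simp [Complex.norm_real, abs_of_nonneg hS0]
        _ = ‖(⟪v, u⟫ : ℂ)‖ := by rw [h1]
        _ ≤ ‖v‖ * ‖u‖ := norm_inner_le_norm _ _
    have h3 : ‖u‖ ^ 2 ≤ C * S := by
      have := hS F c
      have hcs : ∑ j ∈ F, ‖c j‖ ^ 2 = S := by
        rw [hSdef]
        refine Finset.sum_congr rfl fun j _ => ?_
        show ‖(⟪y j, v⟫ : ℂ)‖ ^ 2 = ‖(⟪v, y j⟫ : ℂ)‖ ^ 2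
        rw [norm_inner_symm]
      rwa [hcs] at this
    rcases eq_or_lt_of_le hS0 with h0 | h0
    · rw [← h0]; positivity
    · nlinarith [norm_nonneg v, norm_nonneg u]

lemma aux_dir (A : H →L[ℂ] H) (hA : Commute A (star A)) (x : H) (C : ℝ) (hC : 0 < C)
    (h : IsBesselSequenceWith (fun k : ℕ => (A ^ k) x) C) :
    IsBesselSequenceWith (fun k : ℕ => ((star A) ^ k) x) C := by
  rw [bessel_iff_synthesis _ _ hC] at h ⊢
  intro F c
  set T : H →L[ℂ] H := ∑ k ∈ F, (starRingEnd ℂ) (c k) • A ^ k with hTdef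
  have hstar : star T = ∑ k ∈ F, c k • (star A) ^ k := by
    rw [hTdef, star_sum]
    refine Finset.sum_congr rfl fun k _ => ?_
    rw [star_smul, star_pow]
    simp
  have hTc : T * star T = star T * T := by
    rw [hstar, hTdef]
    refine Commute.sum_left _ _ _ fun i _ => ?_
    refine Commute.sum_right _ _ _ fun j _ => ?_
    exact ((hA.pow_pow i j).smul_left _).smul_right _
  have happ : (star T) x = ∑ k ∈ F, c k • ((star A) ^ k) x := by
    rw [hstar, ContinuousLinearMap.sum_apply]
    exact Finset.sum_congr rfl fun k _ => ContinuousLinearMap.smul_apply _ _ _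
  have hTx : T x = ∑ k ∈ F, (starRingEnd ℂ) (c k) • (A ^ k) x := by
    rw [hTdef, ContinuousLinearMap.sum_apply]
    exact Finset.sum_congr rfl fun k _ => ContinuousLinearMap.smul_apply _ _ _
  calc ‖∑ k ∈ F, c k • ((star A) ^ k) x‖ ^ 2 = ‖(star T) x‖ ^ 2 := by rw [happ]
    _ = ‖T x‖ ^ 2 := by rw [norm_apply_eq_of_normal T hTc x]
    _ = ‖∑ k ∈ F, (starRingEnd ℂ) (c k) • (A ^ k) x‖ ^ 2 := by rw [← hTx]
    _ ≤ C * ∑ k ∈ F, ‖(starRingEnd ℂ) (c k)‖ ^ 2 := h F _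
    _ = C * ∑ k ∈ F, ‖c k‖ ^ 2 := by simp

end Aux

theorem stmt_10 {H : Type*} [NormedAddCommGroup H] [InnerProductSpace ℂ H] [CompleteSpace H]
    (A : H →L[ℂ] H)
    (hA : ContinuousLinearMap.adjoint A ∘L A = A ∘L ContinuousLinearMap.adjoint A)
    (x : H) (C : ℝ) (hC : 0 < C) :
    IsBesselSequenceWith (fun k : ℕ => (A ^ k) x) C ↔
      IsBesselSequenceWith (fun k : ℕ => ((ContinuousLinearMap.adjoint A) ^ k) x) C := by
  have hc : Commute A (star A) := by
    rw [Commute, SemiconjBy, star_eq_adjoint]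
    exact hA.symm
  have hstar : star A = ContinuousLinearMap.adjoint A := star_eq_adjoint A
  constructor
  · intro h
    rw [← hstar]
    exact aux_dir A hc x C hC h
  · intro h
    have hc' : Commute (star A) (star (star A)) := by
      rw [star_star]
      exact hc.symm
    have := aux_dir (star A) hc' x C hC (by rw [hstar]; exact h)
    rwa [star_star] at this
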